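/- Every linear subspace U ⊆ ℝ^{d+1} that is B-invariant (B·U ⊆ U) and contained in the span of the standard basis vectors e₂,…,e_{d−1} (i.e. contained in {x ∈ ℝ^{d+1} : x₁ = x_d = x_{d+1} = 0}) is the zero subspace. -/

import Mathlib

open Matrix

open Finset in

private lemma hockey (m : ℕ) : ∀ j : ℕ, ∑ k ∈ Finset.range j, Nat.choose k m = Nat.choose j (m+1) := by
  intro j
  induction j with
  | zero => simp
  | succ j ih =>
    rw [Finset.sum_range_succ, ih, Nat.choose_succ_succ (n := j) (k := m)]
    simp [Nat.succ_eq_add_one]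
    omega

private lemma mainlem (n : ℕ) (hn : 0 < n) (M' : Matrix (Fin n) (Fin n) ℝ)
    (hM' : ∀ i j : Fin n, M' i j = if i < j then 1 else if j < i then -1 else 0)
    (S : Submodule ℝ (Fin n → ℝ))
    (h0 : ∀ z ∈ S, z ⟨0, hn⟩ = 0)
    (hinv : ∀ z ∈ S, M'.mulVec z ∈ S) :
    ∀ z ∈ S, z = 0 := by
  -- sum over coordinates vanishes
  have H0 : ∀ z ∈ S, ∑ k : Fin n, z k = 0 := by
    intro z hz
    have h1 := h0 _ (hinv z hz)
    have pw : ∀ j : Fin n, M' ⟨0,hn⟩ j * z j = z j - (if j = ⟨0,hn⟩ then z j else 0) := by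
      intro j
      by_cases hj : j = (⟨0,hn⟩ : Fin n)
      · subst hj; simp [hM']
      · have hv : (j:ℕ) ≠ 0 := by simpa [Fin.ext_iff] using hj
        have hlt : (⟨0,hn⟩ : Fin n) < j := by
          simp only [Fin.lt_def]; omega
        have hnot : ¬ j < (⟨0,hn⟩ : Fin n) := by
          simp only [Fin.lt_def]; omega
        simp [hM', hlt, hnot, hj, not_lt_of_gt hlt]
    have h2 : M'.mulVec z ⟨0,hn⟩ = (∑ j : Fin n, z j) - z ⟨0,hn⟩ := by
      simp only [Matrix.mulVec, dotProduct]
      rw [Finset.sum_congr rfl fun j _ => pw j, Finset.sum_sub_distrib,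
        Finset.sum_ite_eq' Finset.univ (⟨0,hn⟩ : Fin n) z]
      simp
    rw [h1, h0 z hz] at h2
    linarith
  -- helper sums
  have hle : ∀ (j : ℕ) (m : ℕ), j ≤ n →
      ∑ k : Fin n, (if (k:ℕ) < j then (Nat.choose (k:ℕ) m : ℝ) else 0)
        = (Nat.choose j (m+1) : ℝ) := by
    intro j m hj
    rw [Fin.sum_univ_eq_sum_range (fun k => if k < j then (Nat.choose k m : ℝ) else 0)]
    have hf : Finset.filter (fun k => k < j) (Finset.range n) = Finset.range j := by
      ext k; simp only [Finset.mem_filter, Finset.mem_range]; omega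
    rw [← Finset.sum_filter, hf, ← Nat.cast_sum, hockey]
  have hT : ∀ m : ℕ, ∑ k : Fin n, (Nat.choose (k:ℕ) m : ℝ) = (Nat.choose n (m+1) : ℝ) := by
    intro m
    rw [← hle n m le_rfl]
    exact Finset.sum_congr rfl fun k _ => by simp [k.isLt]
  -- the key family of linear relations
  have H : ∀ m : ℕ, ∀ z ∈ S, ∑ k : Fin n, (Nat.choose (k:ℕ) m : ℝ) * z k = 0 := by
    intro m
    induction m with
    | zero => intro z hz; simpa using H0 z hz
    | succ m ih =>
      intro z hz
      have h1 := ih _ (hinv z hz)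
      have hsum : ∀ j : Fin n, ∑ k : Fin n, (Nat.choose (k:ℕ) m : ℝ) * M' k j
          = 2 * Nat.choose (j:ℕ) (m+1) + Nat.choose (j:ℕ) m - Nat.choose n (m+1) := by
        intro j
        have pt : ∀ k : Fin n, (Nat.choose (k:ℕ) m : ℝ) * M' k j =
            (if (k:ℕ) < (j:ℕ) then (Nat.choose (k:ℕ) m:ℝ) else 0)
          + ((if (k:ℕ) < (j:ℕ)+1 then (Nat.choose (k:ℕ) m:ℝ) else 0) - (Nat.choose (k:ℕ) m:ℝ)) := by
          intro k
          rw [hM']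
          rcases lt_trichotomy ((k:ℕ)) ((j:ℕ)) with h|h|h
          · have h1 : k < j := Fin.lt_def.mpr h
            rw [if_pos h1, if_pos h, if_pos (by omega : (k:ℕ) < (j:ℕ)+1)]
            ring
          · have h1 : ¬ k < j := by simp only [Fin.lt_def, not_lt]; omega
            have h2 : ¬ j < k := by simp only [Fin.lt_def, not_lt]; omega
            rw [if_neg h1, if_neg h2, if_neg (by omega : ¬ (k:ℕ) < (j:ℕ)),
              if_pos (by omega : (k:ℕ) < (j:ℕ)+1)]
            ring
          · have h1 : ¬ k < j := by simp only [Fin.lt_def, not_lt]; omega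
            have h2 : j < k := Fin.lt_def.mpr h
            rw [if_neg h1, if_pos h2, if_neg (by omega : ¬ (k:ℕ) < (j:ℕ)),
              if_neg (by omega : ¬ (k:ℕ) < (j:ℕ)+1)]
            ring
        rw [Finset.sum_congr rfl fun k _ => pt k, Finset.sum_add_distrib,
          Finset.sum_sub_distrib, hle (j:ℕ) m (le_of_lt j.isLt),
          hle ((j:ℕ)+1) m j.isLt, hT m]
        have : Nat.choose ((j:ℕ)+1) (m+1) = Nat.choose (j:ℕ) m + Nat.choose (j:ℕ) (m+1) :=
          Nat.choose_succ_succ _ _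
        rw [this]
        push_cast
        ring
      have h2 : ∑ k : Fin n, (Nat.choose (k:ℕ) m : ℝ) * (M'.mulVec z) k
          = ∑ j : Fin n, (∑ k : Fin n, (Nat.choose (k:ℕ) m : ℝ) * M' k j) * z j := by
        simp only [Matrix.mulVec, dotProduct, Finset.mul_sum]
        rw [Finset.sum_comm]
        refine Finset.sum_congr rfl fun j _ => ?_
        rw [Finset.sum_mul]
        exact Finset.sum_congr rfl fun k _ => by ring
      rw [h2, Finset.sum_congr rfl fun j _ => by rw [hsum j]] at h1
      have h3 : ∑ j : Fin n, (2 * (Nat.choose (j:ℕ) (m+1):ℝ) + (Nat.choose (j:ℕ) m:ℝ)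
            - (Nat.choose n (m+1):ℝ)) * z j
          = 2 * (∑ j : Fin n, (Nat.choose (j:ℕ) (m+1):ℝ) * z j)
            + (∑ j : Fin n, (Nat.choose (j:ℕ) m:ℝ) * z j)
            - (Nat.choose n (m+1):ℝ) * (∑ j : Fin n, z j) := by
        simp only [Finset.mul_sum]
        rw [← Finset.sum_add_distrib, ← Finset.sum_sub_distrib]
        exact Finset.sum_congr rfl fun j _ => by ring
      rw [h3, ih z hz, H0 z hz] at h1
      linarith
  -- downward induction to kill each coordinate
  intro z hz
  funext j
  have key : ∀ s : ℕ, ∀ j : Fin n, n ≤ (j:ℕ) + s + 1 → z j = 0 := by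
    intro s
    induction s using Nat.strong_induction_on with
    | _ s IH =>
      intro j hj
      have h := H (j:ℕ) z hz
      have hs : ∀ k : Fin n, k ≠ j → (Nat.choose (k:ℕ) ((j:ℕ)) : ℝ) * z k = 0 := by
        intro k hk
        have hne : (k:ℕ) ≠ (j:ℕ) := by simpa [Fin.ext_iff] using hk
        by_cases hlt : (k:ℕ) < (j:ℕ)
        · simp [Nat.choose_eq_zero_of_lt hlt]
        · have hkj : (j:ℕ) < (k:ℕ) := by omega
          have hkn := k.isLt
          have hz0 := IH (s - ((k:ℕ) - (j:ℕ))) (by omega) k (by omega)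
          simp [hz0]
      have hsum := Finset.sum_eq_single j (fun k _ hk => hs k hk) (fun hju => absurd (Finset.mem_univ j) hju)
      rw [hsum] at h
      simpa using h
  exact key n j (by omega)

/-- Let `B` be the `(d+1)×(d+1)` matrix of the Nomizu operator `∇𝐀`, with block form
`[[−a·M_{d−1}, −a·e₁, 0], [a·e₁ᵀ, 0, 0], [0, 0, 0]]`.  Every `B`-invariant linear subspace
contained in the span of `e₂, …, e_{d−1}` (i.e. where the first, `d`-th and `(d+1)`-th
coordinates vanish) is the zero subspace. -/
theorem stmt14 (d : ℕ) (hd : 3 ≤ d) (a : ℝ) (ha : a ≠ 0)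
    (M' : Matrix (Fin (d - 1)) (Fin (d - 1)) ℝ)
    (hM' : ∀ i j : Fin (d - 1), M' i j = if i < j then 1 else if j < i then -1 else 0)
    (B : Matrix ((Fin (d - 1) ⊕ Unit) ⊕ Unit) ((Fin (d - 1) ⊕ Unit) ⊕ Unit) ℝ)
    (hB : B = fromBlocks
      (fromBlocks (-(a • M'))
        (-(a • Matrix.replicateCol Unit (Pi.single (⟨0, by omega⟩ : Fin (d - 1)) 1)))
        (a • Matrix.replicateRow Unit (Pi.single (⟨0, by omega⟩ : Fin (d - 1)) 1))
        (0 : Matrix Unit Unit ℝ))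
      0 0 (0 : Matrix Unit Unit ℝ))
    (U : Submodule ℝ (((Fin (d - 1) ⊕ Unit) ⊕ Unit) → ℝ))
    (hinv : ∀ x ∈ U, B.mulVec x ∈ U)
    (hsub : ∀ x ∈ U, x (Sum.inl (Sum.inl (⟨0, by omega⟩ : Fin (d - 1)))) = 0 ∧
      x (Sum.inl (Sum.inr ())) = 0 ∧ x (Sum.inr ()) = 0) :
    U = ⊥ := by
  have hn : 0 < d - 1 := by omega
  set ι : Fin (d-1) → (Fin (d-1) ⊕ Unit) ⊕ Unit := fun k => Sum.inl (Sum.inl k) with hι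
  have hmem : ∀ x ∈ U, ∀ i : Fin (d-1),
      (B.mulVec x) (ι i) = -a * ∑ j : Fin (d-1), M' i j * x (ι j) := by
    intro x hx i
    obtain ⟨h1, h2, h3⟩ := hsub x hx
    rw [hB]
    simp only [Matrix.mulVec, dotProduct, Fintype.sum_sum_type,
      Matrix.fromBlocks_apply₁₁, Matrix.fromBlocks_apply₁₂, Matrix.neg_apply,
      Matrix.smul_apply, Matrix.replicateCol_apply, Matrix.zero_apply, smul_eq_mul, hι]
    simp only [Finset.univ_unique, Finset.sum_singleton, h2, h3, mul_zero, add_zero,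
      zero_mul, Finset.sum_const, smul_zero]
    rw [Finset.mul_sum]
    exact Finset.sum_congr rfl fun j _ => by ring
  set restr : (((Fin (d-1) ⊕ Unit) ⊕ Unit) → ℝ) →ₗ[ℝ] (Fin (d-1) → ℝ) :=
    LinearMap.funLeft ℝ ℝ ι with hrestr
  set S : Submodule ℝ (Fin (d-1) → ℝ) := U.map restr with hS
  have h0S : ∀ z ∈ S, z ⟨0, hn⟩ = 0 := by
    rintro z ⟨x, hx, rfl⟩
    exact (hsub x hx).1
  have hinvS : ∀ z ∈ S, M'.mulVec z ∈ S := by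
    rintro z ⟨x, hx, rfl⟩
    refine ⟨(-a)⁻¹ • B.mulVec x, U.smul_mem _ (hinv x hx), ?_⟩
    funext i
    have hne : (-a) ≠ 0 := neg_ne_zero.mpr ha
    simp only [hrestr, LinearMap.funLeft_apply, Function.comp_apply, Pi.smul_apply,
      smul_eq_mul]
    rw [hmem x hx i]
    rw [show (-a)⁻¹ * (-a * ∑ j : Fin (d-1), M' i j * x (ι j))
      = ∑ j : Fin (d-1), M' i j * x (ι j) by field_simp]
    rfl
  have hz := mainlem (d-1) hn M' hM' S h0S hinvS
  rw [Submodule.eq_bot_iff]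
  intro x hx
  have hx0 := hz (restr x) ⟨x, hx, rfl⟩
  funext idx
  obtain ⟨h1, h2, h3⟩ := hsub x hx
  rcases idx with (j | u) | u
  · exact congrFun hx0 j
  · cases u; exact h2
  · cases u; exact h3
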